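/- Let (Ω, Σ, P) be a probability space, let k be a positive integer, and let X : Ω → (0,∞) be a random variable such that X, log(X), and (X − E[X])^i for 1 ≤ i ≤ 2k−1 are integrable. Then ∑_{i=1}^{2k−1} ((−1)^i / i) · (E[X])^{−i} · E[(X − E[X])^i] ≤ log(E[X]) − E[log(X)]. -/

import Mathlib

open MeasureTheory ProbabilityTheory Finset

lemma jg_hasDeriv (n : ℕ) (hn : Odd n) {t : ℝ} (ht : -1 < t) :
    HasDerivAt (fun t : ℝ => Real.log (1+t) + ∑ i ∈ Icc 1 n, (-1:ℝ)^i * t^i / i)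
      (-t^n/(1+t)) t := by
  have h1 : (1:ℝ) + t ≠ 0 := by linarith
  have hlog : HasDerivAt (fun t : ℝ => Real.log (1+t)) (1/(1+t)) t := by
    simpa using ((hasDerivAt_id' t).const_add 1).log h1
  have hsum : HasDerivAt (fun t : ℝ => ∑ i ∈ Icc 1 n, (-1:ℝ)^i * t^i / i)
      (∑ i ∈ Icc 1 n, (-1:ℝ)^i * t^(i-1)) t := by
    have := HasDerivAt.fun_sum (fun i (hi : i ∈ Icc 1 n) =>
      (((hasDerivAt_pow i t).const_mul ((-1:ℝ)^i)).div_const (i:ℝ)))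
    refine this.congr_deriv ?_
    refine Finset.sum_congr rfl fun i hi => ?_
    have hi1 : 1 ≤ i := (mem_Icc.mp hi).1
    have : (i:ℝ) ≠ 0 := Nat.cast_ne_zero.mpr (by omega)
    field_simp
  have hre : ∑ i ∈ Icc 1 n, (-1:ℝ)^i * t^(i-1) = -∑ j ∈ range n, (-t)^j := by
    rw [← Finset.Ico_add_one_right_eq_Icc, Finset.sum_Ico_eq_sum_range, ← Finset.sum_neg_distrib]
    refine Finset.sum_congr (by simp) fun j hj => ?_
    have : 1 + j - 1 = j := by omega
    rw [this, neg_pow, pow_add]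
    ring
  have hgeom : ∑ j ∈ range n, (-t:ℝ)^j = ((-t)^n - 1)/(-t - 1) := by
    apply geom_sum_eq
    intro h; apply h1; linarith [h]
  have hneg : (-t:ℝ)^n = -(t^n) := Odd.neg_pow hn t
  have key : 1/(1+t) + ∑ i ∈ Icc 1 n, (-1:ℝ)^i * t^(i-1) = -t^n/(1+t) := by
    have h2 : (-t:ℝ) - 1 ≠ 0 := by intro h; apply h1; linarith
    rw [hre, hgeom, hneg]
    field_simp
    ring
  rw [← key]
  exact hlog.add hsum

lemma jg_pointwise (n : ℕ) (hn : Odd n) {t : ℝ} (ht : -1 < t) :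
    ∑ i ∈ Icc 1 n, (-1:ℝ)^i * t^i / i ≤ -Real.log (1+t) := by
  set f : ℝ → ℝ := fun t => Real.log (1+t) + ∑ i ∈ Icc 1 n, (-1:ℝ)^i * t^i / i with hf
  have hf0 : f 0 = 0 := by
    simp only [hf, add_zero, Real.log_one]
    rw [Finset.sum_eq_zero, add_zero]
    intro i hi
    have : 1 ≤ i := (mem_Icc.mp hi).1
    simp [zero_pow (by omega : i ≠ 0)]
  have hft : f t ≤ 0 := by
    rcases le_or_gt 0 t with h | h
    · have hanti : AntitoneOn f (Set.Ici 0) := by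
        apply antitoneOn_of_deriv_nonpos (convex_Ici 0)
        · intro x hx
          exact ((jg_hasDeriv n hn (by simp at hx; linarith)).continuousAt).continuousWithinAt
        · intro x hx
          rw [interior_Ici] at hx
          exact ((jg_hasDeriv n hn (by simp at hx; linarith)).differentiableAt).differentiableWithinAt
        · intro x hx
          rw [interior_Ici] at hx
          simp only [Set.mem_Ioi] at hx
          rw [(jg_hasDeriv n hn (by linarith)).deriv]
          apply div_nonpos_of_nonpos_of_nonneg
          · simp [pow_nonneg hx.le]
          · linarith
      calc f t ≤ f 0 := hanti (Set.mem_Ici.mpr le_rfl) h h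
        _ = 0 := hf0
    · have hmono : MonotoneOn f (Set.Icc t 0) := by
        apply monotoneOn_of_deriv_nonneg (convex_Icc t 0)
        · intro x hx
          simp only [Set.mem_Icc] at hx
          exact ((jg_hasDeriv n hn (by linarith [hx.1])).continuousAt).continuousWithinAt
        · intro x hx
          rw [interior_Icc] at hx
          exact ((jg_hasDeriv n hn (by linarith [hx.1])).differentiableAt).differentiableWithinAt
        · intro x hx
          rw [interior_Icc] at hx
          obtain ⟨hx1, hx2⟩ := hx
          rw [(jg_hasDeriv n hn (by linarith)).deriv]
          apply div_nonneg
          · simp only [neg_nonneg]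
            exact Odd.pow_nonpos hn hx2.le
          · linarith
      calc f t ≤ f 0 := hmono (Set.mem_Icc.mpr ⟨le_rfl, h.le⟩) (Set.mem_Icc.mpr ⟨h.le, le_rfl⟩) h.le
        _ = 0 := hf0
  simp only [hf] at hft
  linarith

/-- Let `k ≥ 1` and let `X : Ω → (0,∞)` be a random variable such that `X`,
`log(X)` and `(X − E[X])^i` (`1 ≤ i ≤ 2k−1`) are integrable. Then
`∑_{i=1}^{2k−1} ((−1)^i/i)·(E[X])^{−i}·E[(X − E[X])^i] ≤ log(E[X]) − E[log(X)]`. -/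
theorem jensen_gap_log_higher_order_lower
    {Ω : Type*} [MeasurableSpace Ω] (P : Measure Ω) [IsProbabilityMeasure P]
    (k : ℕ) (hk : 0 < k)
    (X : Ω → ℝ) (hX : ∀ ω, 0 < X ω)
    (hXint : Integrable X P)
    (hlogint : Integrable (fun ω => Real.log (X ω)) P)
    (hmom : ∀ i ∈ Finset.Icc 1 (2 * k - 1),
      Integrable (fun ω => (X ω - ∫ ω', X ω' ∂P) ^ i) P) :
    ∑ i ∈ Finset.Icc 1 (2 * k - 1),
        ((-1 : ℝ) ^ i / (i : ℝ)) * (∫ ω, X ω ∂P) ^ (-(i : ℤ)) *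
          (∫ ω, (X ω - ∫ ω', X ω' ∂P) ^ i ∂P)
      ≤ Real.log (∫ ω, X ω ∂P) - ∫ ω, Real.log (X ω) ∂P := by
  set m := ∫ ω, X ω ∂P with hmdef
  have hm : 0 < m := by
    rw [hmdef, integral_pos_iff_support_of_nonneg (fun ω => (hX ω).le) hXint]
    have : Function.support X = Set.univ := by
      ext ω; simp [(hX ω).ne']
    simp [this]
  set n := 2 * k - 1 with hndef
  have hn : Odd n := ⟨k - 1, by omega⟩
  have hpt : ∀ ω, ∑ i ∈ Icc 1 n, ((-1:ℝ)^i/(i:ℝ)) * m^(-(i:ℤ)) * (X ω - m)^i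
      ≤ Real.log m - Real.log (X ω) := by
    intro ω
    have ht : -1 < (X ω - m)/m := by
      rw [lt_div_iff₀ hm]; linarith [hX ω]
    have h := jg_pointwise n hn ht
    have h1t : 1 + (X ω - m)/m = X ω / m := by field_simp; ring
    rw [h1t, Real.log_div (hX ω).ne' hm.ne'] at h
    calc ∑ i ∈ Icc 1 n, ((-1:ℝ)^i/(i:ℝ)) * m^(-(i:ℤ)) * (X ω - m)^i
        = ∑ i ∈ Icc 1 n, (-1:ℝ)^i * ((X ω - m)/m)^i / i := by
          refine Finset.sum_congr rfl fun i hi => ?_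
          rw [zpow_neg, zpow_natCast, div_pow]
          ring
      _ ≤ -(Real.log (X ω) - Real.log m) := h
      _ = Real.log m - Real.log (X ω) := by ring
  have hF : Integrable (fun ω => ∑ i ∈ Icc 1 n,
      ((-1:ℝ)^i/(i:ℝ)) * m^(-(i:ℤ)) * (X ω - m)^i) P := by
    apply integrable_finset_sum
    intro i hi
    exact (hmom i hi).const_mul _
  have hG : Integrable (fun ω => Real.log m - Real.log (X ω)) P :=
    (integrable_const _).sub hlogint
  have hmain := integral_mono hF hG hpt
  rw [integral_finset_sum _ (fun i hi => (hmom i hi).const_mul _)] at hmain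
  simp_rw [integral_const_mul] at hmain
  rw [integral_sub (integrable_const _) hlogint, integral_const] at hmain
  simpa using hmain
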